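/- In the Standard Model finite spectral triple, the operator U := 1⊗1⊗1 + e_{11}⊗(e_{12}+e_{21}−1)⊗e_{11} ∈ M_4(ℂ)⊗M_2(ℂ)⊗M_4(ℂ) satisfies U = U*, U² = 1, U commutes with every element of the algebra A, and UJ = JU. -/

import Mathlib

open scoped ComplexConjugate
open Matrix

/-- The Hilbert space `H = M₄(ℂ) ⊕ M₄(ℂ)` of the finite Standard Model spectral triple,
with inner product `⟨(v,w),(v',w')⟩ = Tr(v*v') + Tr(w*w')`: it is realized as functions
on `Fin 2 × Fin 4 × Fin 4` (the first index `0`/`1` selecting `v`/`w`) with the standard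
inner product. -/
abbrev HSM := EuclideanSpace ℂ (Fin 2 × Fin 4 × Fin 4)

/-- The operator `π(α ⊗ e_{s't'} ⊗ β)` on `HSM`, sending the component `t` to the
component `s` via `u ↦ α u βᵗ` (here `s, t ∈ {0,1}` correspond to the `M₂(ℂ)` matrix unit
`e_{s+1,t+1}`). -/
noncomputable def opE (s t : Fin 2) (α β : Matrix (Fin 4) (Fin 4) ℂ) :
    HSM →ₗ[ℂ] HSM where
  toFun x := WithLp.toLp 2 (fun p : Fin 2 × Fin 4 × Fin 4 =>
    if p.1 = s then ∑ k, ∑ l, α p.2.1 k * β p.2.2 l * x (t, k, l) else 0)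
  map_add' x y := by
    ext p
    by_cases h : p.1 = s <;> simp [h, Finset.sum_add_distrib, mul_add]
  map_smul' c x := by
    ext p
    by_cases h : p.1 = s <;> simp [h, Finset.mul_sum]
    ring_nf
    simp [mul_assoc, mul_comm, mul_left_comm]

/-- The real structure `J(v,w) := (w*, v*)` on `HSM`. -/
noncomputable def JSM : HSM ≃ₛₗ[starRingEnd ℂ] HSM where
  toFun x := WithLp.toLp 2 (fun p : Fin 2 × Fin 4 × Fin 4 =>
    (starRingEnd ℂ) (x (1 - p.1, p.2.2, p.2.1)))
  invFun x := WithLp.toLp 2 (fun p : Fin 2 × Fin 4 × Fin 4 =>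
    (starRingEnd ℂ) (x (1 - p.1, p.2.2, p.2.1)))
  left_inv x := by
    ext p
    obtain ⟨s, i, j⟩ := p
    fin_cases s <;> simp
  right_inv x := by
    ext p
    obtain ⟨s, i, j⟩ := p
    fin_cases s <;> simp
  map_add' x y := by ext p; simp
  map_smul' c x := by ext p; simp

/-- For an antilinear isometry `J` and `ξ ∈ End(H)`, the operator `ξ° := J ξ* J⁻¹`. -/
noncomputable def sharp (J : HSM ≃ₛₗ[starRingEnd ℂ] HSM) (ξ : HSM →ₗ[ℂ] HSM) :
    HSM →ₗ[ℂ] HSM where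
  toFun x := J (star ξ (J.symm x))
  map_add' x y := by simp
  map_smul' c x := by
    show J (star ξ (J.symm (c • x))) = _
    rw [map_smulₛₗ, _root_.map_smul, map_smulₛₗ]; simp

/-- Conjugation `ξ ↦ J ξ J⁻¹` of an operator by the antilinear map `J`. -/
noncomputable def conjJ (J : HSM ≃ₛₗ[starRingEnd ℂ] HSM) (ξ : HSM →ₗ[ℂ] HSM) :
    HSM →ₗ[ℂ] HSM where
  toFun x := J (ξ (J.symm x))
  map_add' x y := by simp
  map_smul' c x := by
    show J (ξ (J.symm (c • x))) = _
    rw [map_smulₛₗ, _root_.map_smul, map_smulₛₗ]; simp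

/-- The commutant of a subset of `End(H)`. -/
def commutant (S : Set (HSM →ₗ[ℂ] HSM)) : Set (HSM →ₗ[ℂ] HSM) :=
  {η | ∀ ξ ∈ S, η * ξ = ξ * η}

/-- `B° := {J ξ* J⁻¹ : ξ ∈ B}`. -/
noncomputable def opp (S : Set (HSM →ₗ[ℂ] HSM)) : Set (HSM →ₗ[ℂ] HSM) :=
  sharp JSM '' S

/-- `Ω¹_D(A)`: the complex span of `{a[D,b] : a, b ∈ A}`. -/
noncomputable def omega1 (Aset : Set (HSM →ₗ[ℂ] HSM)) (D : HSM →ₗ[ℂ] HSM) :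
    Submodule ℂ (HSM →ₗ[ℂ] HSM) :=
  Submodule.span ℂ {x | ∃ a ∈ Aset, ∃ b ∈ Aset, x = a * (D * b - b * D)}

/-- `Cl_D(A)`: the complex `*`-subalgebra of `End(H)` generated by `A` and `Ω¹_D(A)`. -/
noncomputable def cliff (Aset : Set (HSM →ₗ[ℂ] HSM)) (D : HSM →ₗ[ℂ] HSM) :
    StarSubalgebra ℂ (HSM →ₗ[ℂ] HSM) :=
  StarAlgebra.adjoin ℂ (Aset ∪ (omega1 Aset D : Set (HSM →ₗ[ℂ] HSM)))

/-- The matrix unit `e₁₁ ∈ M₄(ℂ)`. -/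
noncomputable def E11 : Matrix (Fin 4) (Fin 4) ℂ :=
  !![1, 0, 0, 0; 0, 0, 0, 0; 0, 0, 0, 0; 0, 0, 0, 0]

/-- The matrix `diag(λ, λ̄) ⊕ q ∈ M₄(ℂ)`, where `q = [[a,b],[-b̄,ā]] ∈ ℍ ⊆ M₂(ℂ)`. -/
noncomputable def Mlq (l a b : ℂ) : Matrix (Fin 4) (Fin 4) ℂ :=
  !![l, 0, 0, 0;
     0, conj l, 0, 0;
     0, 0, a, b;
     0, 0, -(conj b), conj a]

/-- The matrix `λ ⊕ m ∈ M₄(ℂ)` with `m ∈ M₃(ℂ)`. -/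
noncomputable def Mlm (l : ℂ) (m : Matrix (Fin 3) (Fin 3) ℂ) : Matrix (Fin 4) (Fin 4) ℂ :=
  !![l, 0, 0, 0;
     0, m 0 0, m 0 1, m 0 2;
     0, m 1 0, m 1 1, m 1 2;
     0, m 2 0, m 2 1, m 2 2]

/-- The Standard Model algebra `A ≅ ℂ ⊕ ℍ ⊕ M₃(ℂ)`, acting on `HSM` as
`(diag(λ,λ̄) ⊕ q) ⊗ e₁₁ ⊗ 1 + (λ ⊕ m) ⊗ e₂₂ ⊗ 1`. -/
noncomputable def ASM : Set (HSM →ₗ[ℂ] HSM) :=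
  {ξ | ∃ (l a b : ℂ) (m : Matrix (Fin 3) (Fin 3) ℂ),
    ξ = opE 0 0 (Mlq l a b) 1 + opE 1 1 (Mlm l m) 1}

/-- The selfadjoint matrix `A_α ∈ M₄(ℂ)` with upper-right `2×2` block
`α = [[α₁₃,α₁₄],[α₂₃,α₂₄]]`, lower-left block `α*` and zero diagonal blocks. -/
noncomputable def Moff (x13 x14 x23 x24 : ℂ) : Matrix (Fin 4) (Fin 4) ℂ :=
  !![0, 0, x13, x14;
     0, 0, x23, x24;
     conj x13, conj x23, 0, 0;
     conj x14, conj x24, 0, 0]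

/-- The matrix `Δ ∈ M₄(ℂ)` with first row `(0,δ₁₂,δ₁₃,δ₁₄)`, second row
`(δ₂₁,δ₂₂,δ₂₃,δ₂₄)` and zero third and fourth rows. -/
noncomputable def Mdelta (d12 d13 d14 d21 d22 d23 d24 : ℂ) : Matrix (Fin 4) (Fin 4) ℂ :=
  !![0, d12, d13, d14;
     d21, d22, d23, d24;
     0, 0, 0, 0;
     0, 0, 0, 0]

/-- The component `D₀ = A_α ⊗ e₁₁ ⊗ e₁₁ + A_β ⊗ e₁₁ ⊗ (1 − e₁₁) + Δ ⊗ e₁₂ ⊗ e₁₁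
+ Δ* ⊗ e₂₁ ⊗ e₁₁` of the Dirac operator. -/
noncomputable def D0SM (a13 a14 a23 a24 b13 b14 b23 b24 d12 d13 d14 d21 d22 d23 d24 : ℂ) :
    HSM →ₗ[ℂ] HSM :=
  opE 0 0 (Moff a13 a14 a23 a24) E11
    + opE 0 0 (Moff b13 b14 b23 b24) (1 - E11)
    + opE 0 1 (Mdelta d12 d13 d14 d21 d22 d23 d24) E11
    + opE 1 0 (Mdelta d12 d13 d14 d21 d22 d23 d24)ᴴ E11

/-- The component `D_R = e₁₁ ⊗ (Υ_R e₂₁ + Ῡ_R e₁₂) ⊗ e₁₁` of the Dirac operator. -/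
noncomputable def DRSM (yR : ℂ) : HSM →ₗ[ℂ] HSM :=
  yR • opE 1 0 E11 E11 + (conj yR) • opE 0 1 E11 E11

/-- The full Dirac operator `D = D₀ + D₁ + D_R` with `D₁ = J D₀ J⁻¹`. -/
noncomputable def DSM
    (a13 a14 a23 a24 b13 b14 b23 b24 d12 d13 d14 d21 d22 d23 d24 yR : ℂ) :
    HSM →ₗ[ℂ] HSM :=
  D0SM a13 a14 a23 a24 b13 b14 b23 b24 d12 d13 d14 d21 d22 d23 d24
    + conjJ JSM (D0SM a13 a14 a23 a24 b13 b14 b23 b24 d12 d13 d14 d21 d22 d23 d24)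
    + DRSM yR

/-- The operator `U := 1⊗1⊗1 + e₁₁⊗(e₁₂+e₂₁−1)⊗e₁₁`. -/
noncomputable def USM : HSM →ₗ[ℂ] HSM :=
  1 + opE 0 1 E11 E11 + opE 1 0 E11 E11 - opE 0 0 E11 E11 - opE 1 1 E11 E11

def sigSM (p : Fin 2 × Fin 4 × Fin 4) : Fin 2 × Fin 4 × Fin 4 :=
  if p.2.1 = 0 ∧ p.2.2 = 0 then (1 - p.1, p.2) else p

lemma sigSM_invol : Function.Involutive sigSM := by
  intro p
  obtain ⟨s, i, j⟩ := p
  unfold sigSM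
  by_cases h : i = 0 ∧ j = 0
  · simp only [h, and_self, if_true]
    fin_cases s <;> rfl
  · simp [h]

lemma E11_apply (i j : Fin 4) : E11 i j = if i = 0 ∧ j = 0 then 1 else 0 := by
  fin_cases i <;> fin_cases j <;>
    simp [E11, Matrix.vecHead, Matrix.vecTail]

lemma opE_E11_apply (s t : Fin 2) (x : HSM) (p : Fin 2 × Fin 4 × Fin 4) :
    opE s t E11 E11 x p
      = if p.1 = s ∧ p.2.1 = 0 ∧ p.2.2 = 0 then x (t, 0, 0) else 0 := by
  obtain ⟨u, i, j⟩ := p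
  simp only [opE, LinearMap.coe_mk, AddHom.coe_mk, E11_apply]
  by_cases hu : u = s <;> by_cases hi : i = 0 <;> by_cases hj : j = 0 <;>
    simp [hu, hi, hj, Fin.sum_univ_four]

lemma USM_apply (x : HSM) (p : Fin 2 × Fin 4 × Fin 4) :
    USM x p = x (sigSM p) := by
  obtain ⟨s, i, j⟩ := p
  fin_cases s <;> fin_cases i <;> fin_cases j <;>
    simp [USM, sigSM, opE_E11_apply]

lemma opE_one_apply (s t : Fin 2) (M : Matrix (Fin 4) (Fin 4) ℂ) (x : HSM)
    (p : Fin 2 × Fin 4 × Fin 4) :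
    opE s t M 1 x p = if p.1 = s then ∑ k, M p.2.1 k * x (t, k, p.2.2) else 0 := by
  simp only [opE, LinearMap.coe_mk, AddHom.coe_mk]
  split
  · refine Finset.sum_congr rfl fun k _ => ?_
    simp [Matrix.one_apply, mul_ite, ite_mul, Finset.mul_sum]
  · rfl

lemma JSM_apply (x : HSM) (p : Fin 2 × Fin 4 × Fin 4) :
    JSM x p = (starRingEnd ℂ) (x (1 - p.1, p.2.2, p.2.1)) := rfl

/-- In the Standard Model finite spectral triple, the operator
`U = 1⊗1⊗1 + e₁₁⊗(e₁₂+e₂₁−1)⊗e₁₁` satisfies `U = U*`, `U² = 1`, `U` commutes with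
every element of the algebra `A`, and `UJ = JU`. -/
theorem USM_selfadjoint_involutive_commutes :
    star USM = USM ∧
    USM * USM = 1 ∧
    (∀ a ∈ ASM, USM * a = a * USM) ∧
    (∀ x, USM (JSM x) = JSM (USM x)) := by
  refine ⟨?_, ?_, ?_, ?_⟩
  · rw [LinearMap.star_eq_adjoint]
    refine ((LinearMap.eq_adjoint_iff USM USM).mpr fun x y => ?_).symm
    simp only [PiLp.inner_apply, RCLike.inner_apply, USM_apply]
    calc ∑ p, y p * (starRingEnd ℂ) (x (sigSM p))
        = ∑ p, y (sigSM (sigSM p)) * (starRingEnd ℂ) (x (sigSM p)) := by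
          refine Finset.sum_congr rfl fun p _ => by rw [sigSM_invol p]
      _ = ∑ p, y (sigSM p) * (starRingEnd ℂ) (x p) :=
          Equiv.sum_comp sigSM_invol.toPerm fun p => y (sigSM p) * (starRingEnd ℂ) (x p)
  · ext x p
    show USM (USM x) p = (1 : HSM →ₗ[ℂ] HSM) x p
    rw [USM_apply, USM_apply, sigSM_invol p]
    rfl
  · rintro a ⟨l, c, b, m, rfl⟩
    ext x p
    obtain ⟨s, i, j⟩ := p
    simp only [Module.End.mul_apply, LinearMap.add_apply, USM_apply, sigSM]
    fin_cases s <;> fin_cases i <;> fin_cases j <;>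
      simp [opE_one_apply, Fin.sum_univ_four, Mlq, Mlm, USM_apply, sigSM,
        Matrix.vecHead, Matrix.vecTail]
  · intro x
    ext p
    obtain ⟨s, i, j⟩ := p
    rw [USM_apply, JSM_apply, JSM_apply, USM_apply]
    unfold sigSM
    by_cases h : i = 0 ∧ j = 0
    · obtain ⟨hi, hj⟩ := h
      subst hi; subst hj
      fin_cases s <;> rfl
    · have h' : ¬ (j = 0 ∧ i = 0) := fun hh => h ⟨hh.2, hh.1⟩
      rw [if_neg h, if_neg h']
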